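/- Let Φ be the standard normal CDF and logit(x) = log(x) - log(1-x). For constants a < 0 and b ∈ ℝ, the function h(n) = logit(Φ(a·√n + b)) satisfies lim_{n→∞} dh/dn = -a²/2. -/

import Mathlib

open Filter Real

/-- Standard normal CDF. -/
noncomputable def stdNormalCDF (z : ℝ) : ℝ :=
  ∫ t in Set.Iic z, Real.exp (-t ^ 2 / 2) / Real.sqrt (2 * Real.pi)

/-- Logit function. -/
noncomputable def logit (x : ℝ) : ℝ := Real.log x - Real.log (1 - x)

open MeasureTheory

noncomputable def gpdf (t : ℝ) : ℝ := Real.exp (-t ^ 2 / 2) / Real.sqrt (2 * Real.pi)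

lemma stdNormalCDF_eq (z : ℝ) : stdNormalCDF z = ∫ t in Set.Iic z, gpdf t := rfl

lemma gpdf_pos (t : ℝ) : 0 < gpdf t :=
  div_pos (Real.exp_pos _) (Real.sqrt_pos.2 (by positivity))

lemma continuous_gpdf : Continuous gpdf := by
  unfold gpdf; fun_prop

lemma integrable_gpdf : Integrable gpdf := by
  have h : Integrable (fun t : ℝ => Real.exp (-(1/2) * t ^ 2)) :=
    integrable_exp_neg_mul_sq (by norm_num)
  have h2 := h.div_const (Real.sqrt (2 * Real.pi))
  refine h2.congr ?_
  filter_upwards with t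
  unfold gpdf
  congr 1
  ring

lemma integral_gpdf : ∫ t : ℝ, gpdf t = 1 := by
  have h : ∫ t : ℝ, Real.exp (-(1/2) * t ^ 2) = Real.sqrt (Real.pi / (1/2)) :=
    integral_gaussian (1/2)
  have h2 : ∫ t : ℝ, gpdf t = (∫ t : ℝ, Real.exp (-(1/2) * t ^ 2)) / Real.sqrt (2 * Real.pi) := by
    rw [← integral_div]
    congr 1; funext t; unfold gpdf; congr 2; ring
  rw [h2, h]
  rw [show Real.pi / (1/2) = 2 * Real.pi by ring]
  exact div_self (by positivity)

lemma intervalIntegrable_gpdf (c d : ℝ) : IntervalIntegrable gpdf volume c d :=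
  integrable_gpdf.intervalIntegrable

lemma hasDerivAt_stdNormalCDF (z : ℝ) : HasDerivAt stdNormalCDF (gpdf z) z := by
  have h := intervalIntegral.integral_hasDerivAt_right (intervalIntegrable_gpdf 0 z)
    (continuous_gpdf.stronglyMeasurableAtFilter _ _) continuous_gpdf.continuousAt
  have heq : stdNormalCDF = fun u => stdNormalCDF 0 + ∫ t in (0:ℝ)..u, gpdf t := by
    funext u
    rw [stdNormalCDF_eq, stdNormalCDF_eq,
      ← intervalIntegral.integral_Iic_sub_Iic integrable_gpdf.integrableOn
        integrable_gpdf.integrableOn]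
    ring
  rw [heq]
  simpa using h.const_add (stdNormalCDF 0)

lemma stdNormalCDF_pos (z : ℝ) : 0 < stdNormalCDF z := by
  rw [stdNormalCDF_eq]
  refine (setIntegral_pos_iff_support_of_nonneg_ae ?_ integrable_gpdf.integrableOn).2 ?_
  · exact Filter.Eventually.of_forall fun t => (gpdf_pos t).le
  · have hs : Function.support gpdf ∩ Set.Iic z = Set.Iic z := by
      ext t; simp [Function.mem_support, (gpdf_pos t).ne']
    rw [hs, Real.volume_Iic]
    simp

lemma stdNormalCDF_lt_one (z : ℝ) : stdNormalCDF z < 1 := by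
  have hpos : 0 < ∫ t in Set.Ioi z, gpdf t := by
    refine (setIntegral_pos_iff_support_of_nonneg_ae ?_ integrable_gpdf.integrableOn).2 ?_
    · exact Filter.Eventually.of_forall fun t => (gpdf_pos t).le
    · have hs : Function.support gpdf ∩ Set.Ioi z = Set.Ioi z := by
        ext t; simp [Function.mem_support, (gpdf_pos t).ne']
      rw [hs, Real.volume_Ioi]
      simp
  have hsplit : stdNormalCDF z + ∫ t in Set.Ioi z, gpdf t = 1 := by
    rw [stdNormalCDF_eq, ← integral_gpdf]
    exact intervalIntegral.integral_Iic_add_Ioi integrable_gpdf.integrableOn integrable_gpdf.integrableOn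
  linarith

lemma hasDerivAt_gpdf (t : ℝ) : HasDerivAt gpdf (-t * gpdf t) t := by
  have h1 : HasDerivAt (fun s : ℝ => -s ^ 2 / 2) (-t) t := by
    have := ((hasDerivAt_pow 2 t).neg).div_const 2
    simpa using this.congr_deriv (by ring)
  have h3 := h1.exp.div_const (Real.sqrt (2 * Real.pi))
  have : gpdf = fun s => Real.exp (-s ^ 2 / 2) / Real.sqrt (2 * Real.pi) := rfl
  rw [this]
  show HasDerivAt _ (-t * (Real.exp (-t ^ 2 / 2) / Real.sqrt (2 * Real.pi))) t
  exact h3.congr_deriv (by ring)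

lemma tendsto_gpdf_atBot : Tendsto gpdf atBot (nhds 0) := by
  have hsq : Tendsto (fun t : ℝ => t ^ 2) atBot atTop := by
    have h := (tendsto_pow_atTop (n := 2) two_ne_zero).comp tendsto_neg_atBot_atTop (α := ℝ)
    exact h.congr fun t => by simp [neg_pow]
  have harg : Tendsto (fun t : ℝ => -t ^ 2 / 2) atBot atBot := by
    have := tendsto_neg_atTop_atBot.comp hsq
    exact (this.atBot_div_const (by norm_num : (0:ℝ) < 2)).congr fun t => by simp [Function.comp]
  have := (Real.tendsto_exp_atBot.comp harg).div_const (Real.sqrt (2 * Real.pi))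
  have heq : gpdf = fun t => (Real.exp ∘ fun s : ℝ => -s ^ 2 / 2) t / Real.sqrt (2 * Real.pi) := rfl
  rw [heq]
  simpa using this

lemma mills_upper {z : ℝ} (hz : z < 0) : stdNormalCDF z ≤ gpdf z / (-z) := by
  set h : ℝ → ℝ := fun t => gpdf t / (-t) with hh
  have hderiv : ∀ t ∈ Set.Iic z, HasDerivAt h ((1 + 1 / t ^ 2) * gpdf t) t := by
    intro t ht
    have ht0 : t < 0 := lt_of_le_of_lt ht hz
    have hne : -t ≠ 0 := neg_ne_zero.2 ht0.ne
    have hd := (hasDerivAt_gpdf t).div ((hasDerivAt_id t).neg) hne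
    refine hd.congr_deriv ?_
    field_simp [ht0.ne]
    simp only [Pi.neg_apply, id_eq]
    ring
  have hint : IntegrableOn (fun t => (1 + 1 / t ^ 2) * gpdf t) (Set.Iic z) := by
    refine Integrable.mono ((integrable_gpdf.const_mul (1 + 1 / z ^ 2)).integrableOn) ?_ ?_
    · refine ContinuousOn.aestronglyMeasurable ?_ measurableSet_Iic
      refine ContinuousOn.mul ?_ continuous_gpdf.continuousOn
      refine continuousOn_const.add (continuousOn_const.div ?_ ?_)
      · exact (continuousOn_id.pow 2)
      · intro t ht
        have : t < 0 := lt_of_le_of_lt ht hz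
        exact pow_ne_zero 2 this.ne
    · rw [ae_restrict_iff' measurableSet_Iic]
      refine Filter.Eventually.of_forall fun t ht => ?_
      have ht0 : t < 0 := lt_of_le_of_lt ht hz
      have h1 : (0:ℝ) < t ^ 2 := by nlinarith
      have h2 : (0:ℝ) < z ^ 2 := by nlinarith
      have hle : 1 / t ^ 2 ≤ 1 / z ^ 2 := by
        rw [div_le_div_iff₀ h1 h2]
        nlinarith [mul_nonneg (sub_nonneg.2 ht) (show (0:ℝ) ≤ -(t + z) by linarith)]
      have hg := gpdf_pos t
      have hfpos : 0 < (1 + 1 / t ^ 2) * gpdf t := mul_pos (by positivity) hg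
      have hgpos : 0 < (1 + 1 / z ^ 2) * gpdf t := mul_pos (by positivity) hg
      rw [Real.norm_eq_abs, Real.norm_eq_abs, abs_of_pos hfpos, abs_of_pos hgpos]
      exact mul_le_mul_of_nonneg_right (by linarith) hg.le
  have hlim : Tendsto h atBot (nhds 0) := by
    apply squeeze_zero_norm' ?_ tendsto_gpdf_atBot
    filter_upwards [eventually_le_atBot (-1 : ℝ)] with t ht
    have ht1 : (1:ℝ) ≤ -t := by linarith
    have hg := gpdf_pos t
    rw [hh]
    rw [Real.norm_eq_abs, abs_of_pos (div_pos hg (by linarith))]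
    rw [div_le_iff₀ (by linarith : (0:ℝ) < -t)]
    nlinarith
  have key := integral_Iic_of_hasDerivAt_of_tendsto' hderiv hint hlim
  have hmono : stdNormalCDF z ≤ ∫ t in Set.Iic z, (1 + 1 / t ^ 2) * gpdf t := by
    rw [stdNormalCDF_eq]
    refine setIntegral_mono_on integrable_gpdf.integrableOn hint measurableSet_Iic ?_
    intro t ht
    have ht0 : t < 0 := lt_of_le_of_lt ht hz
    have h1 : (0:ℝ) < 1 / t ^ 2 := by
      have : (0:ℝ) < t ^ 2 := by nlinarith
      positivity
    nlinarith [gpdf_pos t]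
  rw [key] at hmono
  simpa [hh] using hmono

lemma mills_lower {z : ℝ} : -z / (1 + z ^ 2) * gpdf z ≤ stdNormalCDF z := by
  set g : ℝ → ℝ := fun t => -t / (1 + t ^ 2) * gpdf t with hg
  have hderiv : ∀ t ∈ Set.Iic z, HasDerivAt g ((1 - 2 / (1 + t ^ 2) ^ 2) * gpdf t) t := by
    intro t _
    have hne : (1 + t ^ 2) ≠ 0 := by positivity
    have hu : HasDerivAt (fun t : ℝ => -t / (1 + t ^ 2)) ((t ^ 2 - 1) / (1 + t ^ 2) ^ 2) t := by
      have hd := ((hasDerivAt_id t).neg).div ((hasDerivAt_pow 2 t).const_add 1) hne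
      refine hd.congr_deriv ?_
      field_simp
      simp only [Pi.neg_apply, id_eq]
      ring
    have := hu.mul (hasDerivAt_gpdf t)
    refine this.congr_deriv ?_
    field_simp
    ring
  have hint : IntegrableOn (fun t => (1 - 2 / (1 + t ^ 2) ^ 2) * gpdf t) (Set.Iic z) := by
    refine Integrable.mono (integrable_gpdf.integrableOn) ?_ ?_
    · refine ContinuousOn.aestronglyMeasurable ?_ measurableSet_Iic
      refine ContinuousOn.mul ?_ continuous_gpdf.continuousOn
      refine continuousOn_const.sub (continuousOn_const.div ?_ ?_)
      · exact ((continuousOn_const.add (continuousOn_id.pow 2)).pow 2)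
      · intro t _; positivity
    · refine Filter.Eventually.of_forall fun t => ?_
      have hg2 := gpdf_pos t
      have h1 : (0:ℝ) < (1 + t ^ 2) ^ 2 := by positivity
      have h2 : 0 < 2 / (1 + t ^ 2) ^ 2 := by positivity
      have h3 : 2 / (1 + t ^ 2) ^ 2 ≤ 2 := by
        rw [div_le_iff₀ h1]; nlinarith
      rw [Real.norm_eq_abs, Real.norm_eq_abs, abs_of_pos hg2, abs_le]
      constructor <;> nlinarith
  have hlim : Tendsto g atBot (nhds 0) := by
    apply squeeze_zero_norm' ?_ tendsto_gpdf_atBot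
    refine Filter.Eventually.of_forall fun t => ?_
    have hg2 := gpdf_pos t
    have h1 : (0:ℝ) < 1 + t ^ 2 := by positivity
    rw [hg, Real.norm_eq_abs, abs_mul, abs_of_pos hg2, abs_div, abs_neg]
    rw [abs_of_pos h1]
    rw [div_mul_eq_mul_div, div_le_iff₀ h1]
    have : |t| ≤ 1 + t ^ 2 := by nlinarith [abs_nonneg t, sq_abs t]
    nlinarith
  have key := integral_Iic_of_hasDerivAt_of_tendsto' hderiv hint hlim
  have hmono : (∫ t in Set.Iic z, (1 - 2 / (1 + t ^ 2) ^ 2) * gpdf t) ≤ stdNormalCDF z := by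
    rw [stdNormalCDF_eq]
    refine setIntegral_mono_on hint integrable_gpdf.integrableOn measurableSet_Iic ?_
    intro t _
    have h2 : 0 < 2 / (1 + t ^ 2) ^ 2 := by positivity
    nlinarith [gpdf_pos t]
  rw [key] at hmono
  simpa [hg] using hmono

lemma hasDerivAt_logit {x : ℝ} (h0 : 0 < x) (h1 : x < 1) :
    HasDerivAt logit (1 / x + 1 / (1 - x)) x := by
  have ha := Real.hasDerivAt_log h0.ne'
  have hb : HasDerivAt (fun x : ℝ => Real.log (1 - x)) (-(1 / (1 - x))) x := by
    have hs : HasDerivAt (fun x : ℝ => 1 - x) (-1) x := by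
      simpa using (hasDerivAt_id x).const_sub 1
    have := (Real.hasDerivAt_log (by linarith : (1:ℝ) - x ≠ 0)).comp x hs
    refine this.congr_deriv ?_
    field_simp
  have hc := ha.sub hb
  have : logit = fun x => Real.log x - Real.log (1 - x) := rfl
  rw [this]
  refine hc.congr_deriv ?_
  rw [one_div, one_div]
  ring

lemma deriv_formula (a b : ℝ) {n : ℝ} (hn : 0 < n) :
    deriv (fun n : ℝ => logit (stdNormalCDF (a * Real.sqrt n + b))) n
      = (1 / stdNormalCDF (a * Real.sqrt n + b)
          + 1 / (1 - stdNormalCDF (a * Real.sqrt n + b)))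
        * (gpdf (a * Real.sqrt n + b) * (a * (1 / (2 * Real.sqrt n)))) := by
  have h1 : HasDerivAt (fun n : ℝ => a * Real.sqrt n + b) (a * (1 / (2 * Real.sqrt n))) n :=
    ((Real.hasDerivAt_sqrt hn.ne').const_mul a).add_const b
  have h2 := (hasDerivAt_stdNormalCDF (a * Real.sqrt n + b)).comp n h1
  have h3 := (hasDerivAt_logit (stdNormalCDF_pos (a * Real.sqrt n + b))
    (stdNormalCDF_lt_one (a * Real.sqrt n + b))).comp n h2
  exact h3.deriv


lemma mills_upper' {z : ℝ} (hz : z < 0) : stdNormalCDF z * -z ≤ gpdf z := by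
  have h := mills_upper hz
  have hz' : (0:ℝ) < -z := by linarith
  rwa [le_div_iff₀ hz'] at h

lemma mills_lower' {z : ℝ} : -z * gpdf z ≤ stdNormalCDF z * (1 + z ^ 2) := by
  have h := mills_lower (z := z)
  have h1 : (0:ℝ) < 1 + z ^ 2 := by positivity
  rwa [div_mul_eq_mul_div, div_le_iff₀ h1] at h

lemma tendsto_sqrt_atTop : Tendsto Real.sqrt atTop atTop :=
  Filter.tendsto_atTop_atTop.2 fun c => ⟨c ^ 2, fun x hx => by
    calc c ≤ |c| := le_abs_self c
    _ = Real.sqrt (c ^ 2) := (Real.sqrt_sq_eq_abs c).symm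
    _ ≤ Real.sqrt x := Real.sqrt_le_sqrt hx⟩

theorem stmt_1 (a b : ℝ) (ha : a < 0) :
    Tendsto (fun n : ℝ => deriv (fun n : ℝ => logit (stdNormalCDF (a * Real.sqrt n + b))) n)
      atTop (nhds (-(a ^ 2) / 2)) := by
  have halg1 : ∀ c w : ℝ, w ≠ 0 → c * -w + c * (-w)⁻¹ = c * ((1 + w ^ 2) / -w) := by
    intro c w hw
    have hw' : -w ≠ 0 := neg_ne_zero.2 hw
    rw [mul_div_assoc'] at *
    rw [eq_div_iff hw']
    field_simp
    ring
  have halg2 : ∀ P G s : ℝ, P ≠ 0 → 1 - P ≠ 0 → s ≠ 0 →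
      (1 / P + 1 / (1 - P)) * (G * (a * (1 / (2 * s))))
        = a / (2 * s) * (G / P) + a / (2 * s) * (G / (1 - P)) := by
    intro P G s hP hP1 hs
    field_simp
  set z : ℝ → ℝ := fun n => a * Real.sqrt n + b with hzdef
  have hz : Tendsto z atTop atBot := by
    apply tendsto_atBot_add_const_right
    exact (tendsto_const_mul_atBot_of_neg ha).2 _root_.tendsto_sqrt_atTop
  have hzneg : ∀ᶠ n in atTop, z n < 0 := hz.eventually (eventually_lt_atBot 0)
  have hnpos : ∀ᶠ n : ℝ in atTop, 0 < n := eventually_gt_atTop 0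
  have h2s : Tendsto (fun n : ℝ => 2 * Real.sqrt n) atTop atTop :=
    (tendsto_const_mul_atTop_of_pos two_pos).2 _root_.tendsto_sqrt_atTop
  have hc : Tendsto (fun n : ℝ => a / (2 * Real.sqrt n)) atTop (nhds 0) :=
    Tendsto.div_atTop tendsto_const_nhds h2s
  have hzinv : Tendsto (fun n => (-z n)⁻¹) atTop (nhds 0) :=
    tendsto_inv_atTop_zero.comp (tendsto_neg_atBot_atTop.comp hz)
  have hgz : Tendsto (fun n => gpdf (z n)) atTop (nhds 0) := tendsto_gpdf_atBot.comp hz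
  have hPhi : Tendsto (fun n => stdNormalCDF (z n)) atTop (nhds 0) := by
    refine tendsto_of_tendsto_of_tendsto_of_le_of_le' tendsto_const_nhds
      (by simpa using hgz.mul hzinv) ?_ ?_
    · exact Filter.Eventually.of_forall fun n => (stdNormalCDF_pos (z n)).le
    · filter_upwards [hzneg] with n hn
      have := mills_upper hn
      rwa [div_eq_mul_inv, inv_neg, mul_neg] at this
  -- upper comparison function
  have hU : Tendsto (fun n : ℝ => a / (2 * Real.sqrt n) * -z n) atTop (nhds (-(a ^ 2) / 2)) := by
    have h2 : Tendsto (fun n : ℝ => a * b / (2 * Real.sqrt n)) atTop (nhds 0) :=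
      Tendsto.div_atTop tendsto_const_nhds h2s
    have h1 : Tendsto (fun n : ℝ => -(a ^ 2) / 2 - a * b / (2 * Real.sqrt n)) atTop
        (nhds (-(a ^ 2) / 2)) := by simpa using tendsto_const_nhds.sub h2
    refine Tendsto.congr' ?_ h1
    filter_upwards [hnpos] with n hn
    have hs : 0 < Real.sqrt n := Real.sqrt_pos.2 hn
    rw [hzdef]
    field_simp
    ring
  -- lower comparison function
  have hL : Tendsto (fun n : ℝ => a / (2 * Real.sqrt n) * ((1 + (z n) ^ 2) / -z n)) atTop
      (nhds (-(a ^ 2) / 2)) := by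
    have h2 : Tendsto (fun n : ℝ => a / (2 * Real.sqrt n) * -z n
        + a / (2 * Real.sqrt n) * (-z n)⁻¹) atTop (nhds (-(a ^ 2) / 2)) := by
      simpa using hU.add (hc.mul hzinv)
    refine Tendsto.congr' ?_ h2
    filter_upwards [hzneg] with n hn
    exact halg1 _ _ hn.ne
  -- T1 via squeeze
  have hT1 : Tendsto (fun n => a / (2 * Real.sqrt n) * (gpdf (z n) / stdNormalCDF (z n)))
      atTop (nhds (-(a ^ 2) / 2)) := by
    refine tendsto_of_tendsto_of_tendsto_of_le_of_le' hL hU ?_ ?_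
    · filter_upwards [hzneg, hnpos] with n hn hn2
      have hs : 0 < Real.sqrt n := Real.sqrt_pos.2 hn2
      have hcneg : a / (2 * Real.sqrt n) ≤ 0 := by
        apply div_nonpos_of_nonpos_of_nonneg ha.le; positivity
      have hP := stdNormalCDF_pos (z n)
      have hratio : gpdf (z n) / stdNormalCDF (z n) ≤ (1 + (z n) ^ 2) / -z n := by
        rw [div_le_div_iff₀ hP (by linarith : (0:ℝ) < -z n)]
        have := mills_lower' (z := z n)
        linarith
      exact mul_le_mul_of_nonpos_left hratio hcneg
    · filter_upwards [hzneg, hnpos] with n hn hn2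
      have hs : 0 < Real.sqrt n := Real.sqrt_pos.2 hn2
      have hcneg : a / (2 * Real.sqrt n) ≤ 0 := by
        apply div_nonpos_of_nonpos_of_nonneg ha.le; positivity
      have hP := stdNormalCDF_pos (z n)
      have hratio : -z n ≤ gpdf (z n) / stdNormalCDF (z n) := by
        rw [le_div_iff₀ hP]
        have := mills_upper' hn
        linarith
      exact mul_le_mul_of_nonpos_left hratio hcneg
  -- T2
  have hT2 : Tendsto (fun n => a / (2 * Real.sqrt n) * (gpdf (z n) / (1 - stdNormalCDF (z n))))
      atTop (nhds 0) := by
    have h1 : Tendsto (fun n => 1 - stdNormalCDF (z n)) atTop (nhds 1) := by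
      simpa using tendsto_const_nhds.sub hPhi
    simpa using hc.mul (hgz.div h1 one_ne_zero)
  have hF : Tendsto (fun n => a / (2 * Real.sqrt n) * (gpdf (z n) / stdNormalCDF (z n))
      + a / (2 * Real.sqrt n) * (gpdf (z n) / (1 - stdNormalCDF (z n)))) atTop
      (nhds (-(a ^ 2) / 2)) := by simpa using hT1.add hT2
  refine Tendsto.congr' ?_ hF
  filter_upwards [hnpos] with n hn
  simp only [hzdef]
  rw [deriv_formula a b hn, eq_comm]
  have hs : 0 < Real.sqrt n := Real.sqrt_pos.2 hn
  have hP := stdNormalCDF_pos (a * Real.sqrt n + b)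
  have hP1 := stdNormalCDF_lt_one (a * Real.sqrt n + b)
  exact halg2 _ _ _ hP.ne' (by linarith) hs.ne'
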